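/- Let L be the limit vector of a regular sequence and 𝓛₊ = {(A,a) ∈ M : L(A,a) ∈ (0,∞)}. Then the linear system Σ_{(ω,i)} A(ω,i) d(ω,i) = ln L(A,a), for all (A,a) ∈ 𝓛₊, has a solution d ∈ ℝ^{Ω×I}. Equivalently, there exists c : Ω×I → (0,∞) with ∏_{(ω,i)} c(ω,i)^{A(ω,i)} = L(A,a) for all (A,a) ∈ 𝓛₊. -/

import Mathlib

open Filter Topology Finset
open scoped ENNReal

/-- The monomial `λ^a ∏_{(ω,i)} x^i(ω)^{A(ω,i)}`, evaluated in `[0,+∞]` with the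
conventions `0^0 = 1`, `0^β = 0` and `0^{-β} = +∞` for `β > 0`. -/
noncomputable def monoVal {Ω I : Type*} [Fintype Ω] [Fintype I]
    (lam : ℝ) (x : Ω → I → ℝ) (A : Ω × I → ℤ) (a : ℤ) : ℝ≥0∞ :=
  (ENNReal.ofReal lam) ^ a * ∏ p : Ω × I, (ENNReal.ofReal (x p.1 p.2)) ^ (A p)

/-- Membership of `(A,a)` in the index set
`M = { (A,a) | A ∈ {-1,0,1}^{Ω×I}, |a| ≤ |Ω| }`. -/
def memM (Ω I : Type*) [Fintype Ω] [Fintype I] (A : Ω × I → ℤ) (a : ℤ) : Prop :=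
  (∀ p, A p = -1 ∨ A p = 0 ∨ A p = 1) ∧ a.natAbs ≤ Fintype.card Ω

/-- A sequence `(λ_n, x_n)` of discount factors and stationary strategies is regular if
`λ_n → 0` and for every `(A,a) ∈ M` the limit `L(A,a) = lim_n λ_n^a ∏ x_n^i(ω)^{A(ω,i)}`
exists in `[0,+∞]`. -/
def IsRegularSeq {Ω I : Type*} [Fintype Ω] [Fintype I]
    (lam : ℕ → ℝ) (x : ℕ → Ω → I → ℝ) : Prop :=
  Tendsto lam atTop (𝓝 0) ∧
  ∀ A a, memM Ω I A a →
    ∃ l : ℝ≥0∞, Tendsto (fun n => monoVal (lam n) (x n) A a) atTop (𝓝 l)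

/- ---------------- auxiliary material ---------------- -/

lemma auxExpZpow (y : ℝ) (n : ℤ) : Real.exp y ^ n = Real.exp (n * y) := by
  rw [← Real.rpow_intCast, Real.rpow_def_of_pos (Real.exp_pos y), Real.log_exp]; ring_nf

lemma auxOfRealZpow {x : ℝ} (hx : 0 < x) (n : ℤ) :
    (ENNReal.ofReal x) ^ n = ENNReal.ofReal (x ^ n) := by
  cases n with
  | ofNat k => simp [ENNReal.ofReal_pow hx.le]
  | negSucc k =>
      simp [zpow_negSucc, ← ENNReal.ofReal_pow hx.le,
        ENNReal.ofReal_inv_of_pos (pow_pos hx _)]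

/-- the linear map `d ↦ (∑ p, coef j p * d p)_j`. -/
noncomputable def auxSumMap {k : Type*} [Fintype k] (S : Type*) (coef : S → k → ℝ) :
    (k → ℝ) →ₗ[ℝ] (S → ℝ) where
  toFun d j := ∑ p, coef j p * d p
  map_add' d e := by funext j; simp [mul_add, Finset.sum_add_distrib]
  map_smul' c d := by funext j; simp [Finset.mul_sum, mul_left_comm]

/-- If the monomial value is neither `0` nor `⊤`, then `x` is positive wherever the
exponent is nonzero. -/
lemma auxPos {Ω I : Type*} [Fintype Ω] [Fintype I]
    {lam : ℝ} {x : Ω → I → ℝ} {A : Ω × I → ℤ} {a : ℤ}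
    (hA : ∀ p, A p = -1 ∨ A p = 0 ∨ A p = 1)
    (hlam : 0 < lam) (hxnn : ∀ p : Ω × I, 0 ≤ x p.1 p.2)
    (h0 : monoVal lam x A a ≠ 0) (ht : monoVal lam x A a ≠ ⊤) :
    ∀ p : Ω × I, A p ≠ 0 → 0 < x p.1 p.2 := by
  intro p hAp
  set f : Ω × I → ℝ≥0∞ := fun q => (ENNReal.ofReal (x q.1 q.2)) ^ (A q) with hf
  have hlamne : ENNReal.ofReal lam ≠ 0 := by
    simp [ENNReal.ofReal_eq_zero, not_le, hlam]
  have hlampow0 : (ENNReal.ofReal lam) ^ a ≠ 0 :=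
    (ENNReal.zpow_pos hlamne ENNReal.ofReal_ne_top a).ne'
  have hlampowt : (ENNReal.ofReal lam) ^ a ≠ ⊤ :=
    (ENNReal.zpow_lt_top hlamne ENNReal.ofReal_ne_top a).ne
  have hP0 : ∏ q : Ω × I, f q ≠ 0 := by
    intro h
    exact h0 (by rw [monoVal, h, mul_zero])
  have hPt : ∏ q : Ω × I, f q ≠ ⊤ := by
    intro h
    exact ht (by rw [monoVal, h, ENNReal.mul_top hlampow0])
  have hfq0 : ∀ q : Ω × I, f q ≠ 0 := by
    intro q hq
    exact hP0 (Finset.prod_eq_zero (Finset.mem_univ q) hq)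
  have hfqt : f p ≠ ⊤ := by
    classical
    intro hq
    apply hPt
    rw [← Finset.mul_prod_erase _ _ (Finset.mem_univ p), hq,
      ENNReal.top_mul (Finset.prod_ne_zero_iff.mpr fun q _ => hfq0 q)]
  by_contra hxp
  have hx0 : ENNReal.ofReal (x p.1 p.2) = 0 := by
    simp only [ENNReal.ofReal_eq_zero]
    exact le_of_not_gt hxp
  rcases hA p with h | h | h
  · apply hfqt
    rw [hf]
    simp only [h, zpow_neg_one, hx0, ENNReal.inv_zero]
  · exact hAp h
  · apply hfq0 p
    rw [hf]
    simp only [h, zpow_one, hx0]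

/-- The monomial value as `ofReal` of a real monomial, under positivity assumptions. -/
lemma auxMonoEq {Ω I : Type*} [Fintype Ω] [Fintype I]
    {lam : ℝ} {x : Ω → I → ℝ} {A : Ω × I → ℤ} {a : ℤ}
    (hlam : 0 < lam) (hpos : ∀ p : Ω × I, A p ≠ 0 → 0 < x p.1 p.2) :
    monoVal lam x A a = ENNReal.ofReal (lam ^ a * ∏ p : Ω × I, x p.1 p.2 ^ (A p)) := by
  have h1 : ∀ p : Ω × I, (ENNReal.ofReal (x p.1 p.2)) ^ (A p)
      = ENNReal.ofReal (x p.1 p.2 ^ (A p)) := by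
    intro p
    by_cases hA : A p = 0
    · simp [hA]
    · exact auxOfRealZpow (hpos p hA) _
  rw [monoVal, auxOfRealZpow hlam]
  rw [Finset.prod_congr rfl (fun p _ => h1 p)]
  rw [← ENNReal.ofReal_prod_of_nonneg, ← ENNReal.ofReal_mul (zpow_nonneg hlam.le a)]
  intro p _
  by_cases hA : A p = 0
  · simp [hA]
  · exact (zpow_pos (hpos p hA) _).le

/-- The log of the monomial value. -/
lemma auxLog {Ω I : Type*} [Fintype Ω] [Fintype I]
    {lam : ℝ} {x : Ω → I → ℝ} {A : Ω × I → ℤ} {a : ℤ}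
    (hlam : 0 < lam) (hpos : ∀ p : Ω × I, A p ≠ 0 → 0 < x p.1 p.2) :
    Real.log (monoVal lam x A a).toReal
      = (a : ℝ) * Real.log lam + ∑ p : Ω × I, (A p : ℝ) * Real.log (x p.1 p.2) := by
  have hfac : ∀ p : Ω × I, x p.1 p.2 ^ (A p) ≠ 0 := by
    intro p
    by_cases hA : A p = 0
    · simp [hA]
    · exact (zpow_pos (hpos p hA) _).ne'
  rw [auxMonoEq hlam hpos, ENNReal.toReal_ofReal]
  · rw [Real.log_mul (zpow_ne_zero _ hlam.ne') (Finset.prod_ne_zero_iff.mpr fun p _ => hfac p),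
      Real.log_zpow, Real.log_prod (fun p _ => hfac p)]
    congr 1
    exact Finset.sum_congr rfl fun p _ => by rw [Real.log_zpow]
  · refine mul_nonneg (zpow_nonneg hlam.le a) (Finset.prod_nonneg fun p _ => ?_)
    by_cases hA : A p = 0
    · simp [hA]
    · exact (zpow_pos (hpos p hA) _).le

theorem coefficient_system_solvable {Ω I : Type*} [Fintype Ω] [Fintype I] [Nonempty I]
    (lam : ℕ → ℝ) (x : ℕ → Ω → I → ℝ)
    (hlam : ∀ n, lam n ∈ Set.Ioc (0:ℝ) 1)
    (hx : ∀ n ω, x n ω ∈ stdSimplex ℝ I)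
    (hreg : IsRegularSeq lam x)
    (L : (Ω × I → ℤ) → ℤ → ℝ≥0∞)
    (hL : ∀ A a, memM Ω I A a →
      Tendsto (fun n => monoVal (lam n) (x n) A a) atTop (𝓝 (L A a))) :
    (∃ d : Ω × I → ℝ,
      ∀ A a, memM Ω I A a → L A a ≠ 0 → L A a ≠ ⊤ →
        ∑ p : Ω × I, (A p : ℝ) * d p = Real.log (L A a).toReal) ∧
    (∃ c : Ω × I → ℝ, (∀ p, 0 < c p) ∧
      ∀ A a, memM Ω I A a → L A a ≠ 0 → L A a ≠ ⊤ →
        ∏ p : Ω × I, (ENNReal.ofReal (c p)) ^ (A p) = L A a) := by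
  classical
  have hxnn : ∀ n (p : Ω × I), 0 ≤ x n p.1 p.2 := fun n p => (hx n p.1).1 p.2
  obtain ⟨hlam0, -⟩ := hreg
  suffices hd : ∃ d : Ω × I → ℝ,
      ∀ A a, memM Ω I A a → L A a ≠ 0 → L A a ≠ ⊤ →
        ∑ p : Ω × I, (A p : ℝ) * d p = Real.log (L A a).toReal by
    refine ⟨hd, ?_⟩
    obtain ⟨d, hdd⟩ := hd
    refine ⟨fun p => Real.exp (d p), fun p => Real.exp_pos _, fun A a hm h0 ht => ?_⟩
    have hsum := hdd A a hm h0 ht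
    have hLpos : 0 < (L A a).toReal := ENNReal.toReal_pos h0 ht
    calc ∏ p : Ω × I, (ENNReal.ofReal (Real.exp (d p))) ^ (A p)
        = ∏ p : Ω × I, ENNReal.ofReal (Real.exp (d p) ^ (A p)) :=
          Finset.prod_congr rfl fun p _ => auxOfRealZpow (Real.exp_pos _) _
      _ = ENNReal.ofReal (∏ p : Ω × I, Real.exp (d p) ^ (A p)) :=
          (ENNReal.ofReal_prod_of_nonneg fun p _ =>
            (zpow_pos (Real.exp_pos _) _).le).symm
      _ = ENNReal.ofReal (Real.exp (∑ p : Ω × I, (A p : ℝ) * d p)) := by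
          rw [Real.exp_sum]
          exact congrArg _ (Finset.prod_congr rfl fun p _ => auxExpZpow _ _)
      _ = L A a := by
          rw [hsum, Real.exp_log hLpos, ENNReal.ofReal_toReal ht]
  -- main part
  set S : Set ((Ω × I → ℤ) × ℤ) :=
    {q | memM Ω I q.1 q.2 ∧ L q.1 q.2 ≠ 0 ∧ L q.1 q.2 ≠ ⊤} with hSdef
  have hSfin : S.Finite := by
    have hsub : S ⊆ (Set.pi Set.univ (fun _ : Ω × I => ({-1, 0, 1} : Set ℤ))) ×ˢ
        (Set.Icc (-(Fintype.card Ω : ℤ)) (Fintype.card Ω)) := by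
      rintro ⟨A, a⟩ ⟨⟨h1, h2⟩, -⟩
      refine ⟨fun p _ => ?_, ?_⟩
      · simp only [Set.mem_insert_iff, Set.mem_singleton_iff]
        exact h1 p
      · simp only [Set.mem_Icc]
        omega
    exact Set.Finite.subset
      ((Set.Finite.pi fun _ => Set.Finite.insert _ (Set.Finite.insert _
        (Set.finite_singleton _))).prod (Set.finite_Icc _ _)) hsub
  haveI : Fintype ↥S := hSfin.fintype
  let E := ↥S → ℝ
  let Ψ : (Ω × I → ℝ) →ₗ[ℝ] E := auxSumMap ↥S (fun j p => ((j : ↥S).1.1 p : ℝ))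
  let α : E := fun j => ((j : ↥S).1.2 : ℝ)
  let ℓv : E := fun j => Real.log (L (j : ↥S).1.1 (j : ↥S).1.2).toReal
  let w : ℕ → Ω × I → ℝ := fun n p => Real.log (x n p.1 p.2)
  let t : ℕ → ℝ := fun n => Real.log (lam n)
  have key : Tendsto (fun n => Ψ (w n) + t n • α) atTop (𝓝 ℓv) := by
    rw [tendsto_pi_nhds]
    rintro ⟨⟨A, a⟩, hm, h0, htp⟩
    have h1 := hL A a hm
    have h2 : Tendsto (fun n => (monoVal (lam n) (x n) A a).toReal) atTop
        (𝓝 (L A a).toReal) := (ENNReal.tendsto_toReal htp).comp h1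
    have hne : (L A a).toReal ≠ 0 := (ENNReal.toReal_pos h0 htp).ne'
    have h3 : Tendsto (fun n => Real.log (monoVal (lam n) (x n) A a).toReal) atTop
        (𝓝 (Real.log (L A a).toReal)) := (Real.continuousAt_log hne).tendsto.comp h2
    have hev : ∀ᶠ n in atTop, monoVal (lam n) (x n) A a ∈ Set.Ioo 0 ⊤ :=
      h1.eventually (Ioo_mem_nhds (pos_iff_ne_zero.mpr h0) (lt_top_iff_ne_top.mpr htp))
    refine Tendsto.congr' ?_ h3
    filter_upwards [hev] with n hn
    have hpos : ∀ p : Ω × I, A p ≠ 0 → 0 < x n p.1 p.2 :=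
      auxPos hm.1 (hlam n).1 (hxnn n) hn.1.ne' hn.2.ne
    rw [auxLog (hlam n).1 hpos]
    show (a : ℝ) * Real.log (lam n) + _ = Ψ (w n) ⟨(A, a), hm, h0, htp⟩ + t n * α ⟨(A, a), hm, h0, htp⟩
    simp only [Ψ, auxSumMap, LinearMap.coe_mk, AddHom.coe_mk, α, t, w]
    ring
  let V : Submodule ℝ E := LinearMap.range Ψ
  let W : Submodule ℝ E := V ⊔ Submodule.span ℝ {α}
  have hWmem : ℓv ∈ W := by
    have hclosed : IsClosed (W : Set E) := Submodule.closed_of_finiteDimensional W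
    refine hclosed.mem_of_tendsto key (Filter.Eventually.of_forall fun n => ?_)
    exact Submodule.add_mem _ (Submodule.mem_sup_left ⟨w n, rfl⟩)
      (Submodule.mem_sup_right (Submodule.smul_mem _ _ (Submodule.mem_span_singleton_self α)))
  have hαV : α ∈ V := by
    by_contra hα
    have hq : Submodule.Quotient.mk (p := V) α ≠ 0 := by
      simpa [Submodule.Quotient.mk_eq_zero] using hα
    obtain ⟨ψ, hψ⟩ : ∃ ψ : Module.Dual ℝ (E ⧸ V), ψ (Submodule.Quotient.mk α) ≠ 0 := by
      by_contra h
      push_neg at h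
      exact hq ((Module.forall_dual_apply_eq_zero_iff ℝ _).mp h)
    let φ : E →ₗ[ℝ] ℝ := (ψ (Submodule.Quotient.mk α))⁻¹ • (ψ ∘ₗ V.mkQ)
    have hφα : φ α = 1 := by
      simp only [φ, LinearMap.smul_apply, LinearMap.comp_apply, Submodule.mkQ_apply,
        smul_eq_mul]
      exact inv_mul_cancel₀ hψ
    have hφV : ∀ v ∈ V, φ v = 0 := by
      intro v hv
      simp only [φ, LinearMap.smul_apply, LinearMap.comp_apply, Submodule.mkQ_apply,
        smul_eq_mul]
      rw [(Submodule.Quotient.mk_eq_zero V).mpr hv, map_zero, mul_zero]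
    have hφcont : Continuous φ := φ.continuous_of_finiteDimensional
    have h4 : Tendsto (fun n => φ (Ψ (w n) + t n • α)) atTop (𝓝 (φ ℓv)) :=
      (hφcont.tendsto ℓv).comp key
    have h5 : ∀ n, φ (Ψ (w n) + t n • α) = t n := by
      intro n
      rw [map_add, map_smul, hφV _ ⟨w n, rfl⟩, hφα, smul_eq_mul, mul_one, zero_add]
    rw [tendsto_congr h5] at h4
    have h7 : Tendsto t atTop atBot := by
      refine Real.tendsto_log_nhdsGT_zero.comp ?_
      exact tendsto_nhdsWithin_of_tendsto_nhds_of_eventually_within _ hlam0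
        (Filter.Eventually.of_forall fun n => (hlam n).1)
    exact not_tendsto_nhds_of_tendsto_atBot h7 _ h4
  have hWV : W = V := by
    refine sup_eq_left.mpr ?_
    rw [Submodule.span_le, Set.singleton_subset_iff]
    exact hαV
  rw [hWV] at hWmem
  obtain ⟨d, hd⟩ := hWmem
  refine ⟨d, fun A a hm h0 ht => ?_⟩
  have := congrFun hd ⟨(A, a), hm, h0, ht⟩
  simpa only [Ψ, auxSumMap, LinearMap.coe_mk, AddHom.coe_mk] using this
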